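/- Let G be a finite connected simple graph with at least one edge that does not have the strict 1-density property. Then a minimal 1-densest subgraph H₀ of G exists, every such H₀ is a proper subgraph of G (H₀ ≠ G), every such H₀ itself has the strict 1-density property, and every such H₀ is homogeneous. -/

import Mathlib

open scoped Classical

noncomputable section

variable {V : Type*} [Fintype V] [DecidableEq V]

/-- `T` is (the edge set of) a spanning tree of the vertex-induced subgraph of `G`
on the vertex set `S`: its edges are edges of `G` with both endpoints in `S`,
it is acyclic, and every two vertices of `S` are joined by a path using edges of `T`. -/
def IsSpanningTreeOn (G : SimpleGraph V) (S : Finset V) (T : Finset (Sym2 V)) : Prop :=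
  (↑T : Set (Sym2 V)) ⊆ G.edgeSet ∧ (∀ e ∈ T, ∀ v ∈ e, v ∈ S) ∧
    (SimpleGraph.fromEdgeSet (↑T : Set (Sym2 V))).IsAcyclic ∧
    ∀ u ∈ S, ∀ w ∈ S, (SimpleGraph.fromEdgeSet (↑T : Set (Sym2 V))).Reachable u w

/-- A probability mass function on the spanning trees of the induced subgraph of `G` on `S`. -/
structure TreePMFOn (G : SimpleGraph V) (S : Finset V) where
  toFun : Finset (Sym2 V) → ℝ
  nonneg : ∀ T, 0 ≤ toFun T
  supp : ∀ T, toFun T ≠ 0 → IsSpanningTreeOn G S T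
  sum_one : ∑ T : Finset (Sym2 V), toFun T = 1

/-- Edge probability `η_μ(e)`. -/
def edgeProbOn {G : SimpleGraph V} {S : Finset V} (μ : TreePMFOn G S) (e : Sym2 V) : ℝ :=
  ∑ T : Finset (Sym2 V), if e ∈ T then μ.toFun T else 0

/-- Edges of `G` with both endpoints in `S`. -/
def inducedEdges (G : SimpleGraph V) (S : Finset V) : Finset (Sym2 V) :=
  G.edgeFinset.filter fun e => ∀ v ∈ e, v ∈ S

/-- Variance of the edge probabilities of `μ` over the edges within `S`. -/
def edgeVarOn {G : SimpleGraph V} {S : Finset V} (μ : TreePMFOn G S) : ℝ :=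
  (∑ e ∈ inducedEdges G S, (edgeProbOn μ e) ^ 2) / ((inducedEdges G S).card : ℝ) -
    ((∑ e ∈ inducedEdges G S, edgeProbOn μ e) / ((inducedEdges G S).card : ℝ)) ^ 2

/-- A pmf is fair if it minimizes the variance of the edge probabilities. -/
def IsFairOn {G : SimpleGraph V} {S : Finset V} (μ : TreePMFOn G S) : Prop :=
  ∀ ν : TreePMFOn G S, edgeVarOn μ ≤ edgeVarOn ν

/-- A fair tree: a spanning tree in the support of some fair pmf. -/
def IsFairTreeOn (G : SimpleGraph V) (S : Finset V) (T : Finset (Sym2 V)) : Prop :=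
  ∃ μ : TreePMFOn G S, IsFairOn μ ∧ μ.toFun T ≠ 0

/-- The 1-density `θ(H) = |E(H)|/(|V(H)|-1)` of the induced subgraph on `S`. -/
def density (G : SimpleGraph V) (S : Finset V) : ℝ :=
  ((inducedEdges G S).card : ℝ) / ((S.card : ℝ) - 1)

/-- `S` induces a member of `H(G)`: connected, vertex-induced, with at least one edge. -/
def InH (G : SimpleGraph V) (S : Finset V) : Prop :=
  (inducedEdges G S).Nonempty ∧ (G.induce (↑S : Set V)).Connected

/-- `S` induces a 1-densest subgraph of `G`. -/
def IsDensest (G : SimpleGraph V) (S : Finset V) : Prop :=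
  InH G S ∧ ∀ S' : Finset V, InH G S' → density G S' ≤ density G S

/-- `S` induces a minimal 1-densest subgraph of `G`. -/
def IsMinimalDensest (G : SimpleGraph V) (S : Finset V) : Prop :=
  IsDensest G S ∧ ∀ S' : Finset V, S' ⊆ S → S' ≠ S → ¬ IsDensest G S'

/-- The induced subgraph on `S` is homogeneous: some pmf on its spanning trees
has constant edge probabilities. -/
def IsHomogeneousOn (G : SimpleGraph V) (S : Finset V) : Prop :=
  ∃ μ : TreePMFOn G S, ∃ c : ℝ, ∀ e ∈ inducedEdges G S, edgeProbOn μ e = c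

/-- The induced subgraph on `S` has the strict 1-density property. -/
def StrictDensityOn (G : SimpleGraph V) (S : Finset V) : Prop :=
  ∀ S' : Finset V, S' ⊆ S → InH G S' → S' ≠ S → density G S' < density G S

set_option linter.unusedSectionVars false
open SimpleGraph

namespace DensestAux

variable {G : SimpleGraph V} {S : Finset V}

/-- Adjacency in a graph built from a finset of edges. -/
lemma adj_fes {A : Finset (Sym2 V)} {u v : V} :
    (fromEdgeSet (↑A : Set (Sym2 V))).Adj u v ↔ s(u, v) ∈ A ∧ u ≠ v := by
  simp [fromEdgeSet_adj]

lemma edge_mem_of_walk_edge {A : Finset (Sym2 V)} {u v : V}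
    (p : (fromEdgeSet (↑A : Set (Sym2 V))).Walk u v) {e : Sym2 V} (he : e ∈ p.edges) :
    e ∈ A ∧ ¬ e.IsDiag := by
  have h := p.edges_subset_edgeSet he
  rw [edgeSet_fromEdgeSet] at h
  exact ⟨h.1, h.2⟩

/-- Reachability with an extra edge whose endpoints are already connected. -/
lemma reachable_of_reachable_insert {A : Finset (Sym2 V)} {a b u w : V}
    (hab : (fromEdgeSet (↑A : Set (Sym2 V))).Reachable a b)
    (h : (fromEdgeSet (↑(insert s(a, b) A) : Set (Sym2 V))).Reachable u w) :
    (fromEdgeSet (↑A : Set (Sym2 V))).Reachable u w := by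
  obtain ⟨p⟩ := h
  induction p with
  | nil => exact Reachable.refl _
  | @cons x y z hxy p ih =>
    refine Reachable.trans ?_ ih
    rw [adj_fes, Finset.mem_insert] at hxy
    obtain ⟨(he | he), hne⟩ := hxy
    · rw [Sym2.eq_iff] at he
      rcases he with ⟨rfl, rfl⟩ | ⟨rfl, rfl⟩
      · exact hab
      · exact hab.symm
    · exact (adj_fes.mpr ⟨he, hne⟩).reachable

/-- Cutting a walk down to the edges all of whose endpoints satisfy a predicate
closed under adjacency. -/
lemma reachable_closed {A B' : Finset (Sym2 V)} {P : V → Prop}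
    (hcl : ∀ u v : V, s(u, v) ∈ A → P u → P v)
    (hmem : ∀ u v : V, s(u, v) ∈ A → P u → P v → s(u, v) ∈ B')
    {u w : V} (hu : P u)
    (h : (fromEdgeSet (↑A : Set (Sym2 V))).Reachable u w) :
    (fromEdgeSet (↑B' : Set (Sym2 V))).Reachable u w := by
  obtain ⟨p⟩ := h
  induction p with
  | nil => exact Reachable.refl _
  | @cons x y z hxy p ih =>
    rw [adj_fes] at hxy
    have hPy : P y := hcl x y hxy.1 hu
    refine Reachable.trans (Adj.reachable ?_) (ih hPy)
    rw [adj_fes]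
    exact ⟨hmem x y hxy.1 hu hPy, hxy.2⟩

lemma isAcyclic_anti {A B : Finset (Sym2 V)} (h : B ⊆ A)
    (hac : (fromEdgeSet (↑A : Set (Sym2 V))).IsAcyclic) :
    (fromEdgeSet (↑B : Set (Sym2 V))).IsAcyclic := by
  intro v c hc
  have hedges : ∀ e ∈ c.edges, e ∈ (fromEdgeSet (↑A : Set (Sym2 V))).edgeSet := by
    intro e he
    obtain ⟨h1, h2⟩ := edge_mem_of_walk_edge c he
    rw [edgeSet_fromEdgeSet]
    exact ⟨h h1, h2⟩
  exact hac (c.transfer _ hedges) (hc.transfer hedges)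

/-- Removing an edge of an acyclic graph disconnects its endpoints. -/
lemma not_reachable_erase_of_acyclic {A : Finset (Sym2 V)}
    (hac : (fromEdgeSet (↑A : Set (Sym2 V))).IsAcyclic)
    {a b : V} (hmem : s(a, b) ∈ A) (hne : a ≠ b) :
    ¬ (fromEdgeSet (↑(A.erase s(a, b)) : Set (Sym2 V))).Reachable a b := by
  intro h
  obtain ⟨p0⟩ := h
  set p := p0.toPath with hp
  have hedges : ∀ e ∈ p.1.edges, e ∈ (fromEdgeSet (↑A : Set (Sym2 V))).edgeSet := by
    intro e he
    obtain ⟨h1, h2⟩ := edge_mem_of_walk_edge p.1 he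
    rw [edgeSet_fromEdgeSet]
    exact ⟨Finset.mem_of_mem_erase h1, h2⟩
  have hadj : (fromEdgeSet (↑A : Set (Sym2 V))).Adj a b := adj_fes.mpr ⟨hmem, hne⟩
  have hq : (⟨p.1.transfer _ hedges, p.2.transfer hedges⟩ :
      (fromEdgeSet (↑A : Set (Sym2 V))).Path a b) = Path.singleton hadj :=
    hac.path_unique _ _
  have : s(a, b) ∈ (p.1.transfer _ hedges).edges := by
    have hq' : p.1.transfer _ hedges = (Path.singleton hadj).1 := congrArg Subtype.val hq
    rw [hq']
    simp [Path.singleton]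
  rw [SimpleGraph.Walk.edges_transfer] at this
  obtain ⟨h1, -⟩ := edge_mem_of_walk_edge p.1 this
  exact (Finset.notMem_erase _ _) h1

/-- Splitting a trail at an edge it passes through. -/
lemma reachable_ends_of_trail_through_edge {A : Finset (Sym2 V)} {a b a' b' : V}
    (p : (fromEdgeSet (↑A : Set (Sym2 V))).Walk a b) (hp : p.IsTrail)
    (he : s(a', b') ∈ p.edges) :
    ((fromEdgeSet (↑(A.erase s(a', b')) : Set (Sym2 V))).Reachable a a' ∧
      (fromEdgeSet (↑(A.erase s(a', b')) : Set (Sym2 V))).Reachable b' b) ∨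
    ((fromEdgeSet (↑(A.erase s(a', b')) : Set (Sym2 V))).Reachable a b' ∧
      (fromEdgeSet (↑(A.erase s(a', b')) : Set (Sym2 V))).Reachable a' b) := by
  induction p with
  | nil => simp at he
  | @cons x y z hxy q ih =>
    rw [SimpleGraph.Walk.edges_cons, List.mem_cons] at he
    rw [SimpleGraph.Walk.isTrail_cons] at hp
    by_cases hcase : s(x, y) = s(a', b')
    · -- the first edge is the removed one
      have hq : ∀ e ∈ q.edges, e ∈ (fromEdgeSet (↑(A.erase s(a', b')) : Set (Sym2 V))).edgeSet := by
        intro e heq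
        obtain ⟨h1, h2⟩ := edge_mem_of_walk_edge q heq
        rw [edgeSet_fromEdgeSet]
        refine ⟨Finset.mem_erase.mpr ⟨?_, h1⟩, h2⟩
        rintro rfl
        exact hp.2 (hcase ▸ heq)
      have hyz : (fromEdgeSet (↑(A.erase s(a', b')) : Set (Sym2 V))).Reachable y z :=
        ⟨q.transfer _ hq⟩
      rw [Sym2.eq_iff] at hcase
      rcases hcase with ⟨rfl, rfl⟩ | ⟨rfl, rfl⟩
      · exact Or.inl ⟨Reachable.refl _, hyz⟩
      · exact Or.inr ⟨Reachable.refl _, hyz⟩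
    · have he' : s(a', b') ∈ q.edges := by
        rcases he with he | he
        · exact absurd he.symm hcase
        · exact he
      have hxyA : s(x, y) ∈ A ∧ x ≠ y := adj_fes.mp hxy
      have hxy' : (fromEdgeSet (↑(A.erase s(a', b')) : Set (Sym2 V))).Adj x y :=
        adj_fes.mpr ⟨Finset.mem_erase.mpr ⟨hcase, hxyA.1⟩, hxyA.2⟩
      rcases ih hp.1 he' with ⟨r1, r2⟩ | ⟨r1, r2⟩
      · exact Or.inl ⟨hxy'.reachable.trans r1, r2⟩
      · exact Or.inr ⟨hxy'.reachable.trans r1, r2⟩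

/-- In a graph minus an edge `s(a,b)`, every vertex reachable (in the full graph) from a
vertex on one of the two sides lies on one of the two sides. -/
lemma reach_side {A : Finset (Sym2 V)} {a b u w : V}
    (h : (fromEdgeSet (↑A : Set (Sym2 V))).Reachable u w)
    (hw : (fromEdgeSet (↑(A.erase s(a, b)) : Set (Sym2 V))).Reachable w a ∨
      (fromEdgeSet (↑(A.erase s(a, b)) : Set (Sym2 V))).Reachable w b) :
    (fromEdgeSet (↑(A.erase s(a, b)) : Set (Sym2 V))).Reachable u a ∨
      (fromEdgeSet (↑(A.erase s(a, b)) : Set (Sym2 V))).Reachable u b := by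
  obtain ⟨p⟩ := h
  induction p with
  | nil => exact hw
  | @cons x y z hxy q ih =>
    have hside := ih hw
    rw [adj_fes] at hxy
    by_cases hcase : s(x, y) = s(a, b)
    · rw [Sym2.eq_iff] at hcase
      rcases hcase with ⟨rfl, rfl⟩ | ⟨rfl, rfl⟩
      · exact Or.inl (Reachable.refl _)
      · exact Or.inr (Reachable.refl _)
    · have hxy' : (fromEdgeSet (↑(A.erase s(a, b)) : Set (Sym2 V))).Adj x y :=
        adj_fes.mpr ⟨Finset.mem_erase.mpr ⟨hcase, hxy.1⟩, hxy.2⟩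
      rcases hside with h1 | h1
      · exact Or.inl (hxy'.reachable.trans h1)
      · exact Or.inr (hxy'.reachable.trans h1)

set_option maxHeartbeats 2000000 in
lemma card_tree_aux : ∀ (n : ℕ) (A : Finset (Sym2 V)) (S : Finset V), A.card ≤ n →
    (∀ e ∈ A, ¬ e.IsDiag) → (fromEdgeSet (↑A : Set (Sym2 V))).IsAcyclic →
    (∀ e ∈ A, ∀ v ∈ e, v ∈ S) → S.Nonempty →
    (∀ u ∈ S, ∀ w ∈ S, (fromEdgeSet (↑A : Set (Sym2 V))).Reachable u w) →
    A.card + 1 = S.card := by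
  intro n
  induction n with
  | zero =>
    intro A S hcard hnd hac hAS hne hreach
    have hA : A = ∅ := Finset.card_eq_zero.mp (Nat.le_zero.mp hcard)
    subst hA
    obtain ⟨a, ha⟩ := hne
    have : S = {a} := by
      apply Finset.eq_singleton_iff_unique_mem.mpr
      refine ⟨ha, fun x hx => ?_⟩
      have := hreach x hx a ha
      rw [Finset.coe_empty, fromEdgeSet_empty, reachable_bot] at this
      exact this
    simp [this]
  | succ n ih =>
    intro A S hcard hnd hac hAS hne hreach
    rcases Finset.eq_empty_or_nonempty A with rfl | ⟨e, heA⟩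
    · obtain ⟨a, ha⟩ := hne
      have : S = {a} := by
        apply Finset.eq_singleton_iff_unique_mem.mpr
        refine ⟨ha, fun x hx => ?_⟩
        have := hreach x hx a ha
        rw [Finset.coe_empty, fromEdgeSet_empty, reachable_bot] at this
        exact this
      simp [this]
    · induction e using Sym2.ind with
      | _ a b =>
      have hab : a ≠ b := by
        intro h
        exact hnd _ heA (by simp [h, Sym2.isDiag_iff_proj_eq])
      have haS : a ∈ S := hAS _ heA a (by simp)
      have hbS : b ∈ S := hAS _ heA b (by simp)
      set B := A.erase s(a, b) with hB
      have hnab : ¬ (fromEdgeSet (↑B : Set (Sym2 V))).Reachable a b :=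
        not_reachable_erase_of_acyclic hac heA hab
      set Sa := S.filter (fun v => (fromEdgeSet (↑B : Set (Sym2 V))).Reachable v a) with hSa
      set Sb := S.filter (fun v => (fromEdgeSet (↑B : Set (Sym2 V))).Reachable v b) with hSb
      have haSa : a ∈ Sa := Finset.mem_filter.mpr ⟨haS, Reachable.refl _⟩
      have hbSb : b ∈ Sb := Finset.mem_filter.mpr ⟨hbS, Reachable.refl _⟩
      have hdisj : Disjoint Sa Sb := by
        rw [Finset.disjoint_left]
        intro v hva hvb
        exact hnab (((Finset.mem_filter.mp hva).2.symm).trans (Finset.mem_filter.mp hvb).2)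
      have hcover : S = Sa ∪ Sb := by
        apply Finset.Subset.antisymm
        · intro v hv
          rcases reach_side (a := a) (b := b) (hreach v hv a haS)
            (Or.inl (Reachable.refl _)) with h1 | h1
          · exact Finset.mem_union_left _ (Finset.mem_filter.mpr ⟨hv, h1⟩)
          · exact Finset.mem_union_right _ (Finset.mem_filter.mpr ⟨hv, h1⟩)
        · intro v hv
          rcases Finset.mem_union.mp hv with h1 | h1
          · exact (Finset.mem_filter.mp h1).1
          · exact (Finset.mem_filter.mp h1).1
      -- membership of endpoints of B-edges in S and sides
      have hBS : ∀ g ∈ B, ∀ v ∈ g, v ∈ S := fun g hg => hAS g (Finset.mem_of_mem_erase hg)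
      set Ba := B.filter (fun g => ∀ v ∈ g, v ∈ Sa) with hBa
      set Bb := B.filter (fun g => ∀ v ∈ g, v ∈ Sb) with hBb
      have hBdisj : Disjoint Ba Bb := by
        rw [Finset.disjoint_left]
        intro g hga hgb
        induction g using Sym2.ind with
        | _ u w =>
        have h1 : u ∈ Sa := (Finset.mem_filter.mp hga).2 u (by simp)
        have h2 : u ∈ Sb := (Finset.mem_filter.mp hgb).2 u (by simp)
        exact Finset.disjoint_left.mp hdisj h1 h2
      have hBcover : B = Ba ∪ Bb := by
        apply Finset.Subset.antisymm
        · intro g hg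
          induction g using Sym2.ind with
          | _ u w =>
          have hnduw : u ≠ w := by
            intro h
            exact hnd _ (Finset.mem_of_mem_erase hg) (by simp [h, Sym2.isDiag_iff_proj_eq])
          have huw : (fromEdgeSet (↑B : Set (Sym2 V))).Reachable u w :=
            (adj_fes.mpr ⟨hg, hnduw⟩).reachable
          have huS : u ∈ S := hBS _ hg u (by simp)
          have hwS : w ∈ S := hBS _ hg w (by simp)
          have huside : u ∈ Sa ∪ Sb := hcover ▸ huS
          rcases Finset.mem_union.mp huside with h1 | h1
          · refine Finset.mem_union_left _ (Finset.mem_filter.mpr ⟨hg, ?_⟩)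
            intro v hv
            rw [Sym2.mem_iff] at hv
            rcases hv with rfl | rfl
            · exact h1
            · exact Finset.mem_filter.mpr ⟨hwS, huw.symm.trans (Finset.mem_filter.mp h1).2⟩
          · refine Finset.mem_union_right _ (Finset.mem_filter.mpr ⟨hg, ?_⟩)
            intro v hv
            rw [Sym2.mem_iff] at hv
            rcases hv with rfl | rfl
            · exact h1
            · exact Finset.mem_filter.mpr ⟨hwS, huw.symm.trans (Finset.mem_filter.mp h1).2⟩
        · intro g hg
          rcases Finset.mem_union.mp hg with h1 | h1
          · exact (Finset.mem_filter.mp h1).1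
          · exact (Finset.mem_filter.mp h1).1
      have hcardB : B.card + 1 = A.card := Finset.card_erase_add_one heA
      have hBaB : Ba ⊆ A := (Finset.filter_subset _ _).trans (Finset.erase_subset _ _)
      have hBbB : Bb ⊆ A := (Finset.filter_subset _ _).trans (Finset.erase_subset _ _)
      -- recursive hypotheses builder
      have hrec : ∀ (C : Finset (Sym2 V)) (Sc : Finset V) (c : V),
          C = B.filter (fun g => ∀ v ∈ g, v ∈ Sc) →
          Sc = S.filter (fun v => (fromEdgeSet (↑B : Set (Sym2 V))).Reachable v c) →
          c ∈ Sc → C.card + 1 = Sc.card := by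
        intro C Sc c hC hSc hcSc
        subst hC
        refine ih _ Sc ?_ ?_ ?_ ?_ ?_ ?_
        · have h1 : (B.filter (fun g => ∀ v ∈ g, v ∈ Sc)).card ≤ B.card :=
            Finset.card_le_card (Finset.filter_subset _ _)
          omega
        · exact fun g hg => hnd g (((Finset.filter_subset _ _).trans (Finset.erase_subset _ _)) hg)
        · exact isAcyclic_anti ((Finset.filter_subset _ _).trans (Finset.erase_subset _ _)) hac
        · intro g hg
          exact (Finset.mem_filter.mp hg).2
        · exact ⟨c, hcSc⟩
        · intro u hu w hw
          rw [hSc] at hu hw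
          have hu' := Finset.mem_filter.mp hu
          have hw' := Finset.mem_filter.mp hw
          rw [← hSc] at hu hw
          have huw : (fromEdgeSet (↑B : Set (Sym2 V))).Reachable u w :=
            hu'.2.trans hw'.2.symm
          refine reachable_closed (P := fun v => v ∈ Sc) ?_ ?_ hu huw
          · intro p q hpq hp
            rw [hSc] at hp ⊢
            refine Finset.mem_filter.mpr ⟨hBS _ hpq q (by simp), ?_⟩
            have hpq' : p ≠ q := by
              intro h
              exact hnd _ (Finset.mem_of_mem_erase hpq) (by simp [h, Sym2.isDiag_iff_proj_eq])
            exact ((adj_fes.mpr ⟨hpq, hpq'⟩).reachable.symm).trans (Finset.mem_filter.mp hp).2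
          · intro p q hpq hp hq
            refine Finset.mem_filter.mpr ⟨hpq, ?_⟩
            intro v hv
            rw [Sym2.mem_iff] at hv
            rcases hv with rfl | rfl
            · exact hp
            · exact hq
      have h1 := hrec Ba Sa a hBa hSa haSa
      have h2 := hrec Bb Sb b hBb hSb hbSb
      have : S.card = Sa.card + Sb.card := by
        rw [hcover]; exact Finset.card_union_of_disjoint hdisj
      have : B.card = Ba.card + Bb.card := by
        rw [hBcover]; exact Finset.card_union_of_disjoint hBdisj
      omega

lemma sdiff_singleton_eq {A : Finset (Sym2 V)} {a b : V} :
    fromEdgeSet (↑A : Set (Sym2 V)) \ fromEdgeSet {s(a, b)} =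
      fromEdgeSet (↑(A.erase s(a, b)) : Set (Sym2 V)) := by
  ext u v
  simp only [sdiff_adj, fromEdgeSet_adj, Set.mem_singleton_iff, Finset.coe_erase,
    Set.mem_diff, Finset.mem_coe, Set.mem_singleton_iff]
  constructor
  · rintro ⟨⟨h1, h2⟩, h3⟩
    refine ⟨⟨h1, fun he => h3 ⟨he, h2⟩⟩, h2⟩
  · rintro ⟨⟨h1, h3⟩, h2⟩
    exact ⟨⟨h1, h2⟩, fun hc => h3 hc.1⟩

/-- Spanning trees contain only induced edges. -/
lemma spanningTree_subset {T : Finset (Sym2 V)} (hT : IsSpanningTreeOn G S T) :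
    T ⊆ inducedEdges G S := by
  intro e he
  exact Finset.mem_filter.mpr ⟨SimpleGraph.mem_edgeFinset.mpr (hT.1 he), hT.2.1 e he⟩

lemma inducedEdges_mem_endpoints {e : Sym2 V} (he : e ∈ inducedEdges G S) :
    e ∈ G.edgeSet ∧ ∀ v ∈ e, v ∈ S := by
  obtain ⟨h1, h2⟩ := Finset.mem_filter.mp he
  exact ⟨SimpleGraph.mem_edgeFinset.mp h1, h2⟩

/-- The exchange argument: if all spanning trees have weight at least `c` and `T`
has weight exactly `c`, then for any induced edge `s(a,b)` its endpoints are connected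
using only edges of `T` of weight at most `x s(a,b)`. -/
lemma exchange {x : Sym2 V → ℝ} {c : ℝ} {T : Finset (Sym2 V)}
    (hlow : ∀ T', IsSpanningTreeOn G S T' → c ≤ ∑ g ∈ T', x g)
    (hT : IsSpanningTreeOn G S T) (hTw : ∑ g ∈ T, x g = c)
    {a b : V} (hfE : s(a, b) ∈ inducedEdges G S) (hab : a ≠ b) :
    (fromEdgeSet (↑(T.filter fun g => x g ≤ x s(a, b)) : Set (Sym2 V))).Reachable a b := by
  by_contra hnr
  obtain ⟨hfG, hfS⟩ := inducedEdges_mem_endpoints hfE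
  have haS : a ∈ S := hfS a (by simp)
  have hbS : b ∈ S := hfS b (by simp)
  have hfT : s(a, b) ∉ T := by
    intro hmem
    exact hnr (Adj.reachable (adj_fes.mpr
      ⟨Finset.mem_filter.mpr ⟨hmem, le_refl _⟩, hab⟩))
  -- a path in T from a to b
  obtain ⟨p0⟩ := hT.2.2.2 a haS b hbS
  set p := p0.toPath with hpdef
  -- some edge on the path has weight > x s(a,b)
  have hexists : ∃ e ∈ p.1.edges, ¬ x e ≤ x s(a, b) := by
    by_contra hall
    push_neg at hall
    have hedges : ∀ e ∈ p.1.edges,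
        e ∈ (fromEdgeSet (↑(T.filter fun g => x g ≤ x s(a, b)) : Set (Sym2 V))).edgeSet := by
      intro e he
      obtain ⟨h1, h2⟩ := edge_mem_of_walk_edge p.1 he
      rw [edgeSet_fromEdgeSet]
      exact ⟨Finset.mem_filter.mpr ⟨h1, hall e he⟩, h2⟩
    exact hnr ⟨p.1.transfer _ hedges⟩
  obtain ⟨e, heP, hxe⟩ := hexists
  push_neg at hxe
  obtain ⟨heT, hend⟩ := edge_mem_of_walk_edge p.1 heP
  -- name the endpoints of e
  induction e using Sym2.ind with
  | _ a' b' =>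
  have ha'b' : a' ≠ b' := by
    intro h
    exact hend (by simp [h, Sym2.isDiag_iff_proj_eq])
  set E' := T.erase s(a', b') with hE'
  -- splitting the path
  have hsplit := reachable_ends_of_trail_through_edge p.1 p.2.isTrail heP
  -- a and b are not connected in E'
  have hnoab : ¬ (fromEdgeSet (↑E' : Set (Sym2 V))).Reachable a b := by
    intro hreach
    have hna'b' := not_reachable_erase_of_acyclic hT.2.2.1 heT ha'b'
    rcases hsplit with ⟨r1, r2⟩ | ⟨r1, r2⟩
    · exact hna'b' ((r1.symm.trans hreach).trans r2.symm)
    · exact hna'b' ((r2.trans hreach.symm).trans r1)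
  set T' := insert s(a, b) E' with hT'
  have hfE' : s(a, b) ∉ E' := fun h => hfT (Finset.mem_of_mem_erase h)
  have habT' : (fromEdgeSet (↑T' : Set (Sym2 V))).Adj a b :=
    adj_fes.mpr ⟨Finset.mem_insert_self _ _, hab⟩
  have hE'T' : (fromEdgeSet (↑E' : Set (Sym2 V))) ≤ (fromEdgeSet (↑T' : Set (Sym2 V))) :=
    fromEdgeSet_mono (by exact_mod_cast Finset.subset_insert _ _)
  -- a' and b' are connected in T'
  have ha'b'T' : (fromEdgeSet (↑T' : Set (Sym2 V))).Reachable a' b' := by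
    rcases hsplit with ⟨r1, r2⟩ | ⟨r1, r2⟩
    · exact ((r1.mono hE'T').symm.trans habT'.reachable).trans (r2.mono hE'T').symm
    · exact ((r2.mono hE'T').trans habT'.reachable.symm).trans (r1.mono hE'T')
  -- T' is a spanning tree
  have hT'span : IsSpanningTreeOn G S T' := by
    refine ⟨?_, ?_, ?_, ?_⟩
    · intro g hg
      rw [Finset.mem_coe, hT', Finset.mem_insert] at hg
      rcases hg with rfl | hg
      · exact hfG
      · exact hT.1 (Finset.mem_of_mem_erase hg)
    · intro g hg v hv
      rw [hT', Finset.mem_insert] at hg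
      rcases hg with rfl | hg
      · exact hfS v hv
      · exact hT.2.1 g (Finset.mem_of_mem_erase hg) v hv
    · -- acyclicity
      intro v C hC
      have hT'noab : ¬ (fromEdgeSet (↑(T'.erase s(a, b)) : Set (Sym2 V))).Reachable a b := by
        rw [hT', Finset.erase_insert hfE']
        exact hnoab
      have hbridge : (fromEdgeSet (↑T' : Set (Sym2 V))).IsBridge s(a, b) := by
        rw [SimpleGraph.isBridge_iff]
        rw [deleteEdges, sdiff_singleton_eq]
        exact hT'noab
      have hnotmem := (SimpleGraph.isBridge_iff_adj_and_forall_cycle_notMem habT').mp hbridge C hC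
      -- transfer the cycle to T
      have hedges : ∀ g ∈ C.edges, g ∈ (fromEdgeSet (↑T : Set (Sym2 V))).edgeSet := by
        intro g hg
        obtain ⟨h1, h2⟩ := edge_mem_of_walk_edge C hg
        rw [edgeSet_fromEdgeSet]
        rw [hT', Finset.mem_insert] at h1
        rcases h1 with rfl | h1
        · exact absurd hg hnotmem
        · exact ⟨Finset.mem_of_mem_erase h1, h2⟩
      exact hT.2.2.1 (C.transfer _ hedges) (hC.transfer hedges)
    · -- connectivity
      intro u hu w hw
      have hTsub : T ⊆ insert s(a', b') T' := by
        intro g hg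
        by_cases hge : g = s(a', b')
        · exact hge ▸ Finset.mem_insert_self _ _
        · exact Finset.mem_insert_of_mem (Finset.mem_insert_of_mem
            (Finset.mem_erase.mpr ⟨hge, hg⟩))
      have hr : (fromEdgeSet (↑(insert s(a', b') T') : Set (Sym2 V))).Reachable u w :=
        (hT.2.2.2 u hu w hw).mono (fromEdgeSet_mono (by exact_mod_cast hTsub))
      exact reachable_of_reachable_insert ha'b'T' hr
  -- weight computation
  have hwT' : ∑ g ∈ T', x g = x s(a, b) + (c - x s(a', b')) := by
    rw [hT', Finset.sum_insert hfE', hE', Finset.sum_erase_eq_sub heT, hTw]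
  have := hlow T' hT'span
  rw [hwT'] at this
  linarith

/-- Transfer reachability from an edge-set graph to the induced subgraph. -/
lemma induce_reachable_of_fromEdgeSet {A : Finset (Sym2 V)} {S' : Finset V}
    (hAG : (↑A : Set (Sym2 V)) ⊆ G.edgeSet) (hAS : ∀ e ∈ A, ∀ v ∈ e, v ∈ S')
    {u w : V} (hu : u ∈ S') (hw : w ∈ S')
    (h : (fromEdgeSet (↑A : Set (Sym2 V))).Reachable u w) :
    (G.induce (↑S' : Set V)).Reachable ⟨u, hu⟩ ⟨w, hw⟩ := by
  obtain ⟨p⟩ := h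
  induction p with
  | nil => exact Reachable.refl _
  | @cons x y z hxy p ih =>
    rw [adj_fes] at hxy
    have hyS : y ∈ S' := hAS _ hxy.1 y (by simp)
    refine Reachable.trans (Adj.reachable (v := ⟨y, hyS⟩) ?_) (ih hyS hw)
    exact G.mem_edgeSet.mp (hAG hxy.1)

/-- Transfer reachability from the induced subgraph to the graph on induced edges. -/
lemma fromEdgeSet_reachable_of_induce {S' : Finset V}
    {u w : ↑(↑S' : Set V)}
    (h : (G.induce (↑S' : Set V)).Reachable u w) :
    (fromEdgeSet (↑(inducedEdges G S') : Set (Sym2 V))).Reachable ↑u ↑w := by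
  obtain ⟨p⟩ := h
  induction p with
  | nil => exact Reachable.refl _
  | @cons x y z hxy p ih =>
    refine Reachable.trans (Adj.reachable ?_) ih
    have hadj : G.Adj ↑x ↑y := hxy
    refine adj_fes.mpr ⟨Finset.mem_filter.mpr ⟨SimpleGraph.mem_edgeFinset.mpr hadj, ?_⟩,
      fun hc => hadj.ne (Subtype.ext_iff.mpr hc ▸ rfl)⟩
    · intro v hv
      rw [Sym2.mem_iff] at hv
      rcases hv with rfl | rfl
      · exact x.2
      · exact y.2

lemma exists_spanningTree (hS : InH G S) : ∃ T, IsSpanningTreeOn G S T := by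
  classical
  set 𝒞 := (inducedEdges G S).powerset.filter
    (fun (A : Finset (Sym2 V)) => ∀ u ∈ S, ∀ w ∈ S, (fromEdgeSet (↑A : Set (Sym2 V))).Reachable u w) with h𝒞
  have hfull : inducedEdges G S ∈ 𝒞 := by
    refine Finset.mem_filter.mpr ⟨Finset.mem_powerset_self _, ?_⟩
    intro u hu w hw
    have := hS.2.preconnected ⟨u, by simpa using hu⟩ ⟨w, by simpa using hw⟩
    exact fromEdgeSet_reachable_of_induce this
  obtain ⟨T, hT𝒞, hTmin⟩ := Finset.exists_min_image 𝒞 Finset.card ⟨_, hfull⟩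
  obtain ⟨hTpow, hTreach⟩ := Finset.mem_filter.mp hT𝒞
  have hTsub : T ⊆ inducedEdges G S := Finset.mem_powerset.mp hTpow
  refine ⟨T, ?_, ?_, ?_, hTreach⟩
  · intro e he
    exact (inducedEdges_mem_endpoints (hTsub he)).1
  · intro e he
    exact (inducedEdges_mem_endpoints (hTsub he)).2
  · -- acyclic by minimality
    intro v C hC
    have hCne : C ≠ SimpleGraph.Walk.nil := hC.ne_nil
    cases C with
    | nil => exact hCne rfl
    | @cons _ y _ hadj C' =>
      have hedge : s(v, y) ∈ T := (adj_fes.mp hadj).1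
      have hvy : v ≠ y := (adj_fes.mp hadj).2
      -- s(v,y) lies on a cycle, so it is not a bridge
      have hnb : ¬ (fromEdgeSet (↑T : Set (Sym2 V))).IsBridge s(v, y) := by
        intro hb
        exact (SimpleGraph.isBridge_iff_adj_and_forall_cycle_notMem hadj).mp hb _ hC
          (by simp)
      rw [SimpleGraph.isBridge_iff] at hnb
      push_neg at hnb
      have hreach' := hnb
      rw [deleteEdges, sdiff_singleton_eq] at hreach'
      -- the erased set still connects S
      have hT' : T.erase s(v, y) ∈ 𝒞 := by
        refine Finset.mem_filter.mpr ⟨Finset.mem_powerset.mpr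
          ((Finset.erase_subset _ _).trans hTsub), ?_⟩
        intro u hu w hw
        have hTsub' : T ⊆ insert s(v, y) (T.erase s(v, y)) := by
          intro g hg
          by_cases hge : g = s(v, y)
          · exact hge ▸ Finset.mem_insert_self _ _
          · exact Finset.mem_insert_of_mem (Finset.mem_erase.mpr ⟨hge, hg⟩)
        have hr := (hTreach u hu w hw).mono (fromEdgeSet_mono (by exact_mod_cast hTsub'))
        exact reachable_of_reachable_insert hreach' hr
      have := hTmin _ hT'
      have hlt : (T.erase s(v, y)).card < T.card := Finset.card_erase_lt_of_mem hedge
      omega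

/-- Existence of a pmf minimizing the sum of squared edge probabilities. -/
lemma exists_min_pmf (hex : ∃ T, IsSpanningTreeOn G S T) :
    ∃ μ : TreePMFOn G S, ∀ ν : TreePMFOn G S,
      (∑ e ∈ inducedEdges G S, (edgeProbOn μ e) ^ 2) ≤
        ∑ e ∈ inducedEdges G S, (edgeProbOn ν e) ^ 2 := by
  classical
  obtain ⟨T₀, hT₀⟩ := hex
  set K : Set (Finset (Sym2 V) → ℝ) :=
    {p | (∀ T, 0 ≤ p T) ∧ (∀ T, p T ≠ 0 → IsSpanningTreeOn G S T) ∧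
      ∑ T : Finset (Sym2 V), p T = 1} with hK
  set f : (Finset (Sym2 V) → ℝ) → ℝ :=
    fun p => ∑ e ∈ inducedEdges G S, (∑ T : Finset (Sym2 V), if e ∈ T then p T else 0) ^ 2
    with hf
  have hfc : Continuous f := by
    apply continuous_finset_sum
    intro e _
    apply Continuous.pow
    apply continuous_finset_sum
    intro T _
    by_cases h : e ∈ T
    · simpa [h] using continuous_apply T
    · simpa [h] using continuous_const
  have hKne : K.Nonempty := by
    refine ⟨fun T => if T = T₀ then 1 else 0, ?_, ?_, ?_⟩
    · intro T; positivity
    · intro T hT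
      by_cases h : T = T₀
      · exact h ▸ hT₀
      · simp [h] at hT
    · simp
  have hKclosed : IsClosed K := by
    have : K = (⋂ T, {p : Finset (Sym2 V) → ℝ | 0 ≤ p T}) ∩
        ((⋂ T, {p : Finset (Sym2 V) → ℝ | p T ≠ 0 → IsSpanningTreeOn G S T}) ∩
          {p | ∑ T : Finset (Sym2 V), p T = 1}) := by
      ext p
      simp only [hK, Set.mem_setOf_eq, Set.mem_inter_iff, Set.mem_iInter]
    rw [this]
    refine IsClosed.inter (isClosed_iInter fun T => ?_)
      (IsClosed.inter (isClosed_iInter fun T => ?_) ?_)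
    · exact isClosed_le continuous_const (continuous_apply T)
    · by_cases h : IsSpanningTreeOn G S T
      · have huniv : {p : Finset (Sym2 V) → ℝ | p T ≠ 0 → IsSpanningTreeOn G S T} =
            Set.univ := by
          ext p; simp [h]
        rw [huniv]
        exact isClosed_univ
      · have : {p : Finset (Sym2 V) → ℝ | p T ≠ 0 → IsSpanningTreeOn G S T} =
            {p | p T = 0} := by
          ext p; simp [h]
        rw [this]
        exact isClosed_eq (continuous_apply T) continuous_const
    · exact isClosed_eq (continuous_finset_sum _ fun T _ => continuous_apply T)
        continuous_const
  have hKbdd : Bornology.IsBounded K := by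
    apply Bornology.IsBounded.subset (Metric.isBounded_closedBall (x := (0 : Finset (Sym2 V) → ℝ)) (r := 1))
    intro p hp
    obtain ⟨hp1, -, hp3⟩ := hp
    rw [Metric.mem_closedBall, dist_pi_le_iff (by norm_num)]
    intro T
    rw [Real.dist_eq]
    have h1 : p T ≤ 1 := by
      rw [← hp3]
      exact Finset.single_le_sum (fun T _ => hp1 T) (Finset.mem_univ T)
    have h0 := hp1 T
    simp only [Pi.zero_apply, sub_zero]
    rw [abs_of_nonneg h0]
    exact h1
  have hKcompact : IsCompact K := Metric.isCompact_of_isClosed_isBounded hKclosed hKbdd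
  obtain ⟨p, hpK, hpmin⟩ := hKcompact.exists_isMinOn hKne hfc.continuousOn
  refine ⟨⟨p, hpK.1, hpK.2.1, hpK.2.2⟩, fun ν => ?_⟩
  have hν : ν.toFun ∈ K := ⟨ν.nonneg, ν.supp, ν.sum_one⟩
  exact hpmin hν

lemma sum_weight_edgeProb (μ : TreePMFOn G S) (E' : Finset (Sym2 V)) (x : Sym2 V → ℝ) :
    ∑ e ∈ E', x e * edgeProbOn μ e
      = ∑ T : Finset (Sym2 V), μ.toFun T * ∑ e ∈ E' ∩ T, x e := by
  unfold edgeProbOn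
  simp_rw [Finset.mul_sum, mul_ite, mul_zero]
  rw [Finset.sum_comm]
  refine Finset.sum_congr rfl fun T _ => ?_
  rw [Finset.sum_ite_mem]
  exact Finset.sum_congr rfl fun e _ => mul_comm _ _

lemma sum_mul_support (μ : TreePMFOn G S) (g : Finset (Sym2 V) → ℝ) (k : ℝ)
    (h : ∀ T, μ.toFun T ≠ 0 → g T = k) :
    ∑ T : Finset (Sym2 V), μ.toFun T * g T = k := by
  have hcong : ∀ T ∈ Finset.univ, μ.toFun T * g T = μ.toFun T * k := by
    intro T _
    by_cases hT : μ.toFun T = 0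
    · simp [hT]
    · rw [h T hT]
  rw [Finset.sum_congr rfl hcong, ← Finset.sum_mul, μ.sum_one, one_mul]

/-- First-order optimality of a minimizer of the sum of squared edge probabilities. -/
lemma first_order {μ : TreePMFOn G S}
    (hmin : ∀ ν : TreePMFOn G S, (∑ e ∈ inducedEdges G S, (edgeProbOn μ e) ^ 2) ≤
      ∑ e ∈ inducedEdges G S, (edgeProbOn ν e) ^ 2)
    (ν : TreePMFOn G S) :
    0 ≤ ∑ e ∈ inducedEdges G S, edgeProbOn μ e * (edgeProbOn ν e - edgeProbOn μ e) := by
  by_contra hB'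
  push_neg at hB'
  set B := ∑ e ∈ inducedEdges G S, edgeProbOn μ e * (edgeProbOn ν e - edgeProbOn μ e) with hBdef
  set C := ∑ e ∈ inducedEdges G S, (edgeProbOn ν e - edgeProbOn μ e) ^ 2 with hCdef
  have hC0 : 0 ≤ C := Finset.sum_nonneg fun e _ => sq_nonneg _
  have key : ∀ t : ℝ, 0 ≤ t → t ≤ 1 → 0 ≤ 2 * t * B + t ^ 2 * C := by
    intro t h0 h1
    have hσnn : ∀ T, 0 ≤ (1 - t) * μ.toFun T + t * ν.toFun T := by
      intro T
      have := μ.nonneg T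
      have := ν.nonneg T
      nlinarith
    set σ : TreePMFOn G S := ⟨fun T => (1 - t) * μ.toFun T + t * ν.toFun T,
      hσnn,
      by
        intro T hT
        by_contra hsp
        have h1' : μ.toFun T = 0 := by
          by_contra h; exact hsp (μ.supp T h)
        have h2' : ν.toFun T = 0 := by
          by_contra h; exact hsp (ν.supp T h)
        refine hT ?_
        show (1 - t) * μ.toFun T + t * ν.toFun T = 0
        rw [h1', h2']; ring,
      by
        show ∑ T : Finset (Sym2 V), ((1 - t) * μ.toFun T + t * ν.toFun T) = 1
        rw [Finset.sum_add_distrib, ← Finset.mul_sum, ← Finset.mul_sum,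
          μ.sum_one, ν.sum_one]
        ring⟩ with hσ
    have hη : ∀ e, edgeProbOn σ e =
        edgeProbOn μ e + t * (edgeProbOn ν e - edgeProbOn μ e) := by
      intro e
      unfold edgeProbOn
      have hsplit : ∀ T ∈ (Finset.univ : Finset (Finset (Sym2 V))),
          (if e ∈ T then σ.toFun T else 0) =
            (1 - t) * (if e ∈ T then μ.toFun T else 0) +
              t * (if e ∈ T then ν.toFun T else 0) := by
        intro T _
        by_cases h : e ∈ T <;> simp [h, hσ]
      rw [Finset.sum_congr rfl hsplit, Finset.sum_add_distrib,
        ← Finset.mul_sum, ← Finset.mul_sum]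
      ring
    have hmσ := hmin σ
    have hexp : ∑ e ∈ inducedEdges G S, (edgeProbOn σ e) ^ 2 =
        (∑ e ∈ inducedEdges G S, (edgeProbOn μ e) ^ 2) + 2 * t * B + t ^ 2 * C := by
      rw [hBdef, hCdef, Finset.mul_sum, Finset.mul_sum]
      rw [← Finset.sum_add_distrib, ← Finset.sum_add_distrib]
      refine Finset.sum_congr rfl fun e _ => ?_
      rw [hη e]
      ring
    rw [hexp] at hmσ
    linarith
  rcases le_or_gt C 0 with hC | hC
  · have h1 := key 1 zero_le_one le_rfl
    nlinarith
  · set t := min 1 (-B / C) with ht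
    have ht0 : 0 < t := lt_min one_pos (div_pos (neg_pos.mpr hB') hC)
    have ht1 : t ≤ 1 := min_le_left _ _
    have ht2 : t ≤ -B / C := min_le_right _ _
    have htC : t * C ≤ -B := by
      rw [le_div_iff₀ hC] at ht2
      exact ht2
    have hk := key t ht0.le ht1
    nlinarith

/-- Weight properties of a minimizer: every spanning tree has weight at least `c`,
and every support tree has weight exactly `c`. -/
lemma minimizer_weights {μ : TreePMFOn G S}
    (hmin : ∀ ν : TreePMFOn G S, (∑ e ∈ inducedEdges G S, (edgeProbOn μ e) ^ 2) ≤
      ∑ e ∈ inducedEdges G S, (edgeProbOn ν e) ^ 2) :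
    (∀ T', IsSpanningTreeOn G S T' →
      (∑ e ∈ inducedEdges G S, (edgeProbOn μ e) ^ 2) ≤ ∑ g ∈ T', edgeProbOn μ g) ∧
    (∀ T, μ.toFun T ≠ 0 →
      ∑ g ∈ T, edgeProbOn μ g = ∑ e ∈ inducedEdges G S, (edgeProbOn μ e) ^ 2) := by
  classical
  set c := ∑ e ∈ inducedEdges G S, (edgeProbOn μ e) ^ 2 with hc
  have hlow : ∀ T', IsSpanningTreeOn G S T' → c ≤ ∑ g ∈ T', edgeProbOn μ g := by
    intro T' hT'
    set ν : TreePMFOn G S := ⟨fun T => if T = T' then 1 else 0,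
      by intro T; positivity,
      by
        intro T hT
        by_cases h : T = T'
        · exact h ▸ hT'
        · exfalso; apply hT; simp [h],
      by simp⟩ with hν
    have hy : ∀ e, edgeProbOn ν e = if e ∈ T' then 1 else 0 := by
      intro e
      unfold edgeProbOn
      rw [Finset.sum_eq_single T']
      · simp [hν]
      · intro T _ hne
        simp [hν, hne]
      · simp
    have hfo := first_order hmin ν
    have hXY : ∑ e ∈ inducedEdges G S, edgeProbOn μ e * (edgeProbOn ν e - edgeProbOn μ e)
        = (∑ e ∈ inducedEdges G S, edgeProbOn μ e * edgeProbOn ν e) - c := by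
      rw [hc, ← Finset.sum_sub_distrib]
      refine Finset.sum_congr rfl fun e _ => by ring
    have hXYT : ∑ e ∈ inducedEdges G S, edgeProbOn μ e * edgeProbOn ν e
        = ∑ g ∈ T', edgeProbOn μ g := by
      have hstep : ∀ e ∈ inducedEdges G S, edgeProbOn μ e * edgeProbOn ν e =
          if e ∈ T' then edgeProbOn μ e else 0 := by
        intro e _
        rw [hy e]
        by_cases h : e ∈ T' <;> simp [h]
      rw [Finset.sum_congr rfl hstep, Finset.sum_ite_mem,
        Finset.inter_eq_right.mpr (spanningTree_subset hT')]
    rw [hXY, hXYT] at hfo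
    linarith
  refine ⟨hlow, ?_⟩
  have hswap := sum_weight_edgeProb μ (inducedEdges G S) (edgeProbOn μ)
  set w : Finset (Sym2 V) → ℝ := fun T => ∑ e ∈ inducedEdges G S ∩ T, edgeProbOn μ e with hw
  have hcs : c = ∑ T : Finset (Sym2 V), μ.toFun T * w T := by
    rw [← hswap, hc]
    exact Finset.sum_congr rfl fun e _ => sq (edgeProbOn μ e) ▸ by ring
  have hinter : ∀ T, IsSpanningTreeOn G S T → inducedEdges G S ∩ T = T :=
    fun T h => Finset.inter_eq_right.mpr (spanningTree_subset h)
  have hzero : ∑ T : Finset (Sym2 V), μ.toFun T * (w T - c) = 0 := by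
    have hcong : ∀ T ∈ (Finset.univ : Finset (Finset (Sym2 V))),
        μ.toFun T * (w T - c) = μ.toFun T * w T - μ.toFun T * c := fun T _ => by ring
    rw [Finset.sum_congr rfl hcong, Finset.sum_sub_distrib, ← hcs, ← Finset.sum_mul,
      μ.sum_one]
    ring
  have hnn : ∀ T ∈ (Finset.univ : Finset (Finset (Sym2 V))), 0 ≤ μ.toFun T * (w T - c) := by
    intro T _
    by_cases h : μ.toFun T = 0
    · simp [h]
    · have hsp := μ.supp T h
      have hwT : c ≤ w T := by
        have := hlow T hsp
        rw [hw]
        simpa [hinter T hsp] using this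
      exact mul_nonneg (μ.nonneg T) (by linarith)
  have hall := (Finset.sum_eq_zero_iff_of_nonneg hnn).mp hzero
  intro T hT
  have h0 := hall T (Finset.mem_univ T)
  have hsp := μ.supp T hT
  have hwTc : w T = c := by
    rcases mul_eq_zero.mp h0 with h | h
    · exact absurd h hT
    · linarith
  have : w T = ∑ g ∈ T, edgeProbOn μ g := by
    rw [hw]
    simp only
    rw [hinter T hsp]
  rw [← this, hwTc]

set_option maxHeartbeats 1000000 in
/-- The main lemma: every 1-densest induced subgraph is homogeneous. -/
lemma isHomogeneousOn_of_densest (hd : IsDensest G S) : IsHomogeneousOn G S := by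
  classical
  obtain ⟨μ, hmin⟩ := exists_min_pmf (exists_spanningTree hd.1)
  obtain ⟨hlow, hsupp⟩ := minimizer_weights hmin
  obtain ⟨e₀, he₀⟩ := hd.1.1
  -- the induced-edge set of a support tree
  have hTsub : ∀ T, μ.toFun T ≠ 0 → T ⊆ inducedEdges G S :=
    fun T hT => spanningTree_subset (μ.supp T hT)
  have hSne : S.Nonempty :=
    ⟨_, (inducedEdges_mem_endpoints he₀).2 _ (Sym2.out_fst_mem e₀)⟩
  -- cardinality of support trees
  have hTcard : ∀ T, μ.toFun T ≠ 0 → T.card + 1 = S.card := by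
    intro T hT
    have hsp := μ.supp T hT
    refine card_tree_aux T.card T S le_rfl ?_ hsp.2.2.1 hsp.2.1 hSne hsp.2.2.2
    intro e he
    exact G.not_isDiag_of_mem_edgeSet (hsp.1 he)
  -- average: the edge probabilities over the induced edges sum to |S| - 1
  have havg : ∑ e ∈ inducedEdges G S, edgeProbOn μ e = (S.card : ℝ) - 1 := by
    have h1 : ∑ e ∈ inducedEdges G S, (1 : ℝ) * edgeProbOn μ e
        = ∑ T : Finset (Sym2 V), μ.toFun T * ∑ e ∈ inducedEdges G S ∩ T, (1 : ℝ) :=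
      sum_weight_edgeProb μ _ _
    have h2 : ∑ T : Finset (Sym2 V),
        μ.toFun T * ∑ e ∈ inducedEdges G S ∩ T, (1 : ℝ) = (S.card : ℝ) - 1 := by
      apply sum_mul_support
      intro T hT
      rw [Finset.inter_eq_right.mpr (hTsub T hT), Finset.sum_const, nsmul_eq_mul, mul_one]
      have := hTcard T hT
      push_cast [← this]
      ring
    calc ∑ e ∈ inducedEdges G S, edgeProbOn μ e
        = ∑ e ∈ inducedEdges G S, (1 : ℝ) * edgeProbOn μ e := by
          exact Finset.sum_congr rfl fun e _ => (one_mul _).symm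
      _ = (S.card : ℝ) - 1 := h1.trans h2
  -- if the probabilities are constant, we are done
  by_cases hconst : ∀ e ∈ inducedEdges G S, edgeProbOn μ e = edgeProbOn μ e₀
  · exact ⟨μ, edgeProbOn μ e₀, hconst⟩
  exfalso
  push_neg at hconst
  obtain ⟨e₁, he₁, he₁ne⟩ := hconst
  -- the minimal edge probability m
  obtain ⟨f₀, hf₀ES, hf₀min⟩ := Finset.exists_min_image (inducedEdges G S)
    (edgeProbOn μ) ⟨e₀, he₀⟩
  set m := edgeProbOn μ f₀ with hm
  -- some edge has probability > m
  have hexistsbig : ∃ e' ∈ inducedEdges G S, m < edgeProbOn μ e' := by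
    by_cases h : edgeProbOn μ e₀ = m
    · exact ⟨e₁, he₁, lt_of_le_of_ne (hf₀min e₁ he₁) (fun hc => he₁ne (hc ▸ h.symm))⟩
    · exact ⟨e₀, he₀, lt_of_le_of_ne (hf₀min e₀ he₀) (Ne.symm h)⟩
  have hS2 : 2 ≤ S.card := by
    obtain ⟨hG0, hS0⟩ := inducedEdges_mem_endpoints he₀
    have hnd := G.not_isDiag_of_mem_edgeSet hG0
    induction e₀ using Sym2.ind with
    | _ p q =>
    have hpq : p ≠ q := fun h => hnd (by simp [h, Sym2.isDiag_iff_proj_eq])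
    exact Finset.one_lt_card_iff.mpr ⟨p, q, hS0 p (by simp), hS0 q (by simp), hpq⟩
  have hn1 : (0 : ℝ) < (S.card : ℝ) - 1 := by
    have : (2 : ℝ) ≤ (S.card : ℝ) := by exact_mod_cast hS2
    linarith
  -- strict inequality on the average
  have hstrictsum : m * (inducedEdges G S).card < (S.card : ℝ) - 1 := by
    rw [← havg]
    obtain ⟨e', he'E, he'big⟩ := hexistsbig
    have : ∑ _e ∈ inducedEdges G S, m < ∑ e ∈ inducedEdges G S, edgeProbOn μ e :=
      Finset.sum_lt_sum (fun e he => hf₀min e he) ⟨e', he'E, he'big⟩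
    rw [Finset.sum_const, nsmul_eq_mul] at this
    linarith [this]
  -- the set of minimal edges
  set F := (inducedEdges G S).filter (fun g => edgeProbOn μ g = m) with hF
  have hf₀F : f₀ ∈ F := Finset.mem_filter.mpr ⟨hf₀ES, rfl⟩
  have hFsub : F ⊆ inducedEdges G S := Finset.filter_subset _ _
  -- (f) exchange: per support tree, endpoints of F-edges are connected in T ∩ F
  have key1 : ∀ T, μ.toFun T ≠ 0 → ∀ a b : V, s(a, b) ∈ F →
      (fromEdgeSet (↑(T ∩ F) : Set (Sym2 V))).Reachable a b := by
    intro T hT a b habF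
    have hspT := μ.supp T hT
    have habES : s(a, b) ∈ inducedEdges G S := hFsub habF
    have hab : a ≠ b := by
      intro h
      exact G.not_isDiag_of_mem_edgeSet ((inducedEdges_mem_endpoints habES).1)
        (by simp [h, Sym2.isDiag_iff_proj_eq])
    have hxab : edgeProbOn μ s(a, b) = m := (Finset.mem_filter.mp habF).2
    have hfeq : T.filter (fun g => edgeProbOn μ g ≤ edgeProbOn μ s(a, b)) = T ∩ F := by
      ext g
      constructor
      · intro hg
        obtain ⟨hgT, hgle⟩ := Finset.mem_filter.mp hg
        have hgES := hTsub T hT hgT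
        have hge := hf₀min g hgES
        rw [hxab] at hgle
        exact Finset.mem_inter.mpr ⟨hgT,
          Finset.mem_filter.mpr ⟨hgES, le_antisymm hgle hge⟩⟩
      · intro hg
        obtain ⟨hgT, hgF⟩ := Finset.mem_inter.mp hg
        refine Finset.mem_filter.mpr ⟨hgT, ?_⟩
        rw [hxab]
        exact le_of_eq (Finset.mem_filter.mp hgF).2
    have := exchange hlow hspT (hsupp T hT) habES hab
    rwa [hfeq] at this
  -- (g) reachability in F implies reachability in T ∩ F
  have key2 : ∀ T, μ.toFun T ≠ 0 → ∀ u w : V,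
      (fromEdgeSet (↑F : Set (Sym2 V))).Reachable u w →
      (fromEdgeSet (↑(T ∩ F) : Set (Sym2 V))).Reachable u w := by
    intro T hT u w h
    obtain ⟨p⟩ := h
    induction p with
    | nil => exact Reachable.refl _
    | @cons p q r hpq pw ih =>
      rw [adj_fes] at hpq
      exact (key1 T hT p q hpq.1).trans ih
  -- name the endpoints of f₀
  have hf₀G := (inducedEdges_mem_endpoints hf₀ES).1
  have hf₀S := (inducedEdges_mem_endpoints hf₀ES).2
  have hf₀nd := G.not_isDiag_of_mem_edgeSet hf₀G
  induction f₀ using Sym2.ind with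
  | _ a₀ b₀ =>
  have ha₀b₀ : a₀ ≠ b₀ := fun h => hf₀nd (by simp [h, Sym2.isDiag_iff_proj_eq])
  have ha₀S : a₀ ∈ S := hf₀S a₀ (by simp)
  have hb₀S : b₀ ∈ S := hf₀S b₀ (by simp)
  -- the component of a₀ in F
  set S' := S.filter (fun v => (fromEdgeSet (↑F : Set (Sym2 V))).Reachable v a₀) with hS'
  have ha₀S' : a₀ ∈ S' := Finset.mem_filter.mpr ⟨ha₀S, Reachable.refl _⟩
  have hb₀S' : b₀ ∈ S' := Finset.mem_filter.mpr
    ⟨hb₀S, ((adj_fes.mpr ⟨hf₀F, ha₀b₀⟩).reachable).symm⟩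
  have hS'sub : S' ⊆ S := Finset.filter_subset _ _
  -- endpoints of F-edges lie in S and the S'-side is closed under F-adjacency
  have hFend : ∀ g ∈ F, ∀ v ∈ g, v ∈ S :=
    fun g hg => (inducedEdges_mem_endpoints (hFsub hg)).2
  have hFnd : ∀ g ∈ F, ¬ g.IsDiag :=
    fun g hg => G.not_isDiag_of_mem_edgeSet (inducedEdges_mem_endpoints (hFsub hg)).1
  have hFclosed : ∀ u v : V, s(u, v) ∈ F → u ∈ S' → v ∈ S' := by
    intro u v huv hu
    have hvS : v ∈ S := hFend _ huv v (by simp)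
    have hne : u ≠ v := fun h => hFnd _ huv (by simp [h, Sym2.isDiag_iff_proj_eq])
    refine Finset.mem_filter.mpr ⟨hvS, ?_⟩
    exact ((adj_fes.mpr ⟨huv, hne⟩).reachable).symm.trans (Finset.mem_filter.mp hu).2
  -- F-edges inside S'
  set F' := F.filter (fun g => ∀ v ∈ g, v ∈ S') with hF'
  have hf₀F' : s(a₀, b₀) ∈ F' := by
    refine Finset.mem_filter.mpr ⟨hf₀F, ?_⟩
    intro v hv
    rw [Sym2.mem_iff] at hv
    rcases hv with rfl | rfl
    · exact ha₀S'
    · exact hb₀S'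
  have hF'sub : F' ⊆ F := Finset.filter_subset _ _
  -- (i) per support tree, the count of F'-edges in the tree is |S'| - 1
  have count2 : ∀ T, μ.toFun T ≠ 0 → (F' ∩ T).card + 1 = S'.card := by
    intro T hT
    have hspT := μ.supp T hT
    set TF' := (T ∩ F).filter (fun g => ∀ v ∈ g, v ∈ S') with hTF'
    have hinterF : F' ∩ T = TF' := by
      ext g
      simp only [hF', hTF', Finset.mem_inter, Finset.mem_filter]
      tauto
    rw [hinterF]
    have hTFsub : TF' ⊆ T := (Finset.filter_subset _ _).trans Finset.inter_subset_left
    refine card_tree_aux TF'.card TF' S' le_rfl ?_ ?_ ?_ ⟨a₀, ha₀S'⟩ ?_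
    · intro e he
      exact G.not_isDiag_of_mem_edgeSet (hspT.1 (hTFsub he))
    · exact isAcyclic_anti (by exact_mod_cast hTFsub) hspT.2.2.1
    · intro e he
      exact (Finset.mem_filter.mp he).2
    · intro u hu w hw
      have hur : (fromEdgeSet (↑F : Set (Sym2 V))).Reachable u w :=
        (Finset.mem_filter.mp hu).2.trans (Finset.mem_filter.mp hw).2.symm
      have h2 := key2 T hT u w hur
      refine reachable_closed (P := fun v => v ∈ S') ?_ ?_ hu h2
      · intro p q hpq hp
        exact hFclosed p q (Finset.inter_subset_right hpq) hp
      · intro p q hpq hp hq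
        refine Finset.mem_filter.mpr ⟨hpq, ?_⟩
        intro v hv
        rw [Sym2.mem_iff] at hv
        rcases hv with rfl | rfl
        · exact hp
        · exact hq
  -- (j) m * |F'| = |S'| - 1
  have hsum2 : m * (F'.card : ℝ) = (S'.card : ℝ) - 1 := by
    have h1 : ∑ e ∈ F', (1 : ℝ) * edgeProbOn μ e
        = ∑ T : Finset (Sym2 V), μ.toFun T * ∑ e ∈ F' ∩ T, (1 : ℝ) :=
      sum_weight_edgeProb μ _ _
    have h2 : ∑ T : Finset (Sym2 V), μ.toFun T * ∑ e ∈ F' ∩ T, (1 : ℝ)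
        = (S'.card : ℝ) - 1 := by
      apply sum_mul_support
      intro T hT
      rw [Finset.sum_const, nsmul_eq_mul, mul_one]
      have := count2 T hT
      push_cast [← this]
      ring
    have h3 : ∑ e ∈ F', (1 : ℝ) * edgeProbOn μ e = m * (F'.card : ℝ) := by
      have hcong : ∀ e ∈ F', (1 : ℝ) * edgeProbOn μ e = m := by
        intro e he
        rw [one_mul]
        exact (Finset.mem_filter.mp (hF'sub he)).2
      rw [Finset.sum_congr rfl hcong, Finset.sum_const, nsmul_eq_mul, mul_comm]
    rw [← h3, h1, h2]
  -- counting: |S'| ≥ 2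
  have hS'2 : 2 ≤ S'.card := Finset.one_lt_card_iff.mpr
    ⟨a₀, b₀, ha₀S', hb₀S', ha₀b₀⟩
  have hn2 : (1 : ℝ) ≤ (S'.card : ℝ) - 1 := by
    have : (2 : ℝ) ≤ (S'.card : ℝ) := by exact_mod_cast hS'2
    linarith
  have hF'pos : 0 < (F'.card : ℝ) := by
    have : 0 < F'.card := Finset.card_pos.mpr ⟨_, hf₀F'⟩
    exact_mod_cast this
  have hmpos : 0 < m := by
    nlinarith
  -- (l) S' induces a member of H(G)
  have hF'G : (↑F' : Set (Sym2 V)) ⊆ G.edgeSet := by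
    intro g hg
    exact (inducedEdges_mem_endpoints (hFsub (hF'sub hg))).1
  have hF'S' : ∀ g ∈ F', ∀ v ∈ g, v ∈ S' := fun g hg => (Finset.mem_filter.mp hg).2
  have hF'indS' : F' ⊆ inducedEdges G S' := by
    intro g hg
    refine Finset.mem_filter.mpr ⟨?_, hF'S' g hg⟩
    exact SimpleGraph.mem_edgeFinset.mpr (hF'G hg)
  have hInH' : InH G S' := by
    constructor
    · exact ⟨_, hF'indS' hf₀F'⟩
    · rw [SimpleGraph.connected_iff]
      constructor
      · rintro ⟨u, hu⟩ ⟨w, hw⟩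
        have hu' : u ∈ S' := by simpa using hu
        have hw' : w ∈ S' := by simpa using hw
        have hur : (fromEdgeSet (↑F : Set (Sym2 V))).Reachable u w :=
          (Finset.mem_filter.mp hu').2.trans (Finset.mem_filter.mp hw').2.symm
        have hF'reach : (fromEdgeSet (↑F' : Set (Sym2 V))).Reachable u w := by
          refine reachable_closed (P := fun v => v ∈ S') hFclosed ?_ hu' hur
          intro p q hpq hp hq
          refine Finset.mem_filter.mpr ⟨hpq, ?_⟩
          intro v hv
          rw [Sym2.mem_iff] at hv
          rcases hv with rfl | rfl
          · exact hp
          · exact hq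
        exact induce_reachable_of_fromEdgeSet hF'G hF'S' hu' hw' hF'reach
      · exact ⟨⟨a₀, by simpa using ha₀S'⟩⟩
  -- (m) the density contradiction
  have hdle := hd.2 S' hInH'
  have hn2pos : (0 : ℝ) < (S'.card : ℝ) - 1 := by linarith
  have hcardle : (F'.card : ℝ) ≤ ((inducedEdges G S').card : ℝ) := by
    exact_mod_cast Finset.card_le_card hF'indS'
  have h1 : m * density G S < 1 := by
    have heq : m * density G S = m * ((inducedEdges G S).card : ℝ) / ((S.card : ℝ) - 1) := by
      rw [density]
      ring
    rw [heq]
    exact (div_lt_one hn1).mpr hstrictsum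
  have h2 : 1 ≤ m * density G S' := by
    have heq : m * density G S'
        = m * ((inducedEdges G S').card : ℝ) / ((S'.card : ℝ) - 1) := by
      rw [density]
      ring
    rw [heq, le_div_iff₀ hn2pos, one_mul]
    calc (S'.card : ℝ) - 1 = m * (F'.card : ℝ) := hsum2.symm
      _ ≤ m * ((inducedEdges G S').card : ℝ) :=
          mul_le_mul_of_nonneg_left hcardle hmpos.le
  have h3 : m * density G S' ≤ m * density G S :=
    mul_le_mul_of_nonneg_left hdle hmpos.le
  linarith

end DensestAux

/-- If a finite connected simple graph `G` with at least one edge does not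
have the strict 1-density property, then a minimal 1-densest subgraph `H₀` exists, every
such `H₀` is a proper subgraph of `G`, has itself the strict 1-density property, and is
homogeneous. -/
theorem minimalDensest_exists_proper_strict_homogeneous
    {V : Type*} [Fintype V] [DecidableEq V] (G : SimpleGraph V) (hG : G.Connected)
    (hE : G.edgeFinset.Nonempty) (hstrict : ¬ StrictDensityOn G Finset.univ) :
    (∃ S : Finset V, IsMinimalDensest G S) ∧
    ∀ S : Finset V, IsMinimalDensest G S →
      S ≠ Finset.univ ∧ StrictDensityOn G S ∧ IsHomogeneousOn G S := by
  classical
  have hInHuniv : InH G Finset.univ := by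
    constructor
    · have : inducedEdges G Finset.univ = G.edgeFinset :=
        Finset.filter_true_of_mem (fun e _ => fun v _ => Finset.mem_univ v)
      rw [this]
      exact hE
    · rw [Finset.coe_univ]
      exact (SimpleGraph.induceUnivIso G).connected_iff.mpr hG
  -- the set of candidates
  set C : Finset (Finset V) := Finset.univ.filter (fun S => InH G S) with hC
  have hCuniv : Finset.univ ∈ C := Finset.mem_filter.mpr ⟨Finset.mem_univ _, hInHuniv⟩
  obtain ⟨S₁, hS₁C, hS₁max⟩ := Finset.exists_max_image C (density G) ⟨_, hCuniv⟩
  have hS₁dense : IsDensest G S₁ := by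
    refine ⟨(Finset.mem_filter.mp hS₁C).2, fun S' hS' => ?_⟩
    exact hS₁max S' (Finset.mem_filter.mpr ⟨Finset.mem_univ _, hS'⟩)
  set D : Finset (Finset V) := Finset.univ.filter (fun S => IsDensest G S) with hD
  have hS₁D : S₁ ∈ D := Finset.mem_filter.mpr ⟨Finset.mem_univ _, hS₁dense⟩
  obtain ⟨S₂, hS₂D, hS₂min⟩ := Finset.exists_min_image D Finset.card ⟨_, hS₁D⟩
  have hS₂ : IsMinimalDensest G S₂ := by
    refine ⟨(Finset.mem_filter.mp hS₂D).2, fun S' hsub hne hdense => ?_⟩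
    have hlt : S'.card < S₂.card := Finset.card_lt_card (ssubset_of_subset_of_ne hsub hne)
    have := hS₂min S' (Finset.mem_filter.mpr ⟨Finset.mem_univ _, hdense⟩)
    omega
  refine ⟨⟨S₂, hS₂⟩, fun S hS => ?_⟩
  have hne : S ≠ Finset.univ := by
    intro heq
    subst heq
    rw [StrictDensityOn] at hstrict
    push_neg at hstrict
    obtain ⟨S', hsub, hInH', hne', hge⟩ := hstrict
    have hdense' : IsDensest G S' :=
      ⟨hInH', fun S'' h'' => (hS.1.2 S'' h'').trans hge⟩
    exact hS.2 S' hsub hne' hdense'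
  refine ⟨hne, ?_, DensestAux.isHomogeneousOn_of_densest hS.1⟩
  intro S' hsub hInH' hne'
  rcases lt_or_eq_of_le (hS.1.2 S' hInH') with hlt | heq
  · exact hlt
  · exfalso
    have hdense' : IsDensest G S' :=
      ⟨hInH', fun S'' h'' => (hS.1.2 S'' h'').trans (le_of_eq heq.symm)⟩
    exact hS.2 S' hsub hne' hdense'
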